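/- Let k, r be positive integers with r ≥ 2 and gcd(k+1,r-1)=1, β = -(r-1)/(k+1). Suppose μ is a (k,r,n)-admissible partition and λ is obtained from μ by adding one node in row j (so λ_j = μ_j + 1), and λ is not (k,r,n)-admissible. Then j > k, μ_{j-k} = μ_j + r, and (k+1)·β + μ_{j-k} - μ_j - 1 = 0, i.e., the Pieri coefficient ψ'_{λ/μ} vanishes at β. -/

import Mathlib

/-- If μ is (k,r,n)-admissible, λ is obtained from μ by adding one
node in row j, and λ is not (k,r,n)-admissible, then j > k, μ_{j-k} = μ_j + r,
the factor (k+1)β + μ_{j-k} - μ_j - 1 vanishes at β = -(r-1)/(k+1), and hence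
the Pieri coefficient ψ'_{λ/μ} vanishes. -/
theorem pieri_coefficient_vanishes (k r n : ℕ) (hk : 1 ≤ k) (hr : 2 ≤ r)
    (hcop : Nat.Coprime (k + 1) (r - 1))
    (β : ℚ) (hβ : β = -((r : ℚ) - 1) / ((k : ℚ) + 1))
    (μ : ℕ → ℕ)
    (hmono : ∀ i, 1 ≤ i → μ (i + 1) ≤ μ i)
    (hadm : ∀ i, 1 ≤ i → i + k ≤ n → μ (i + k) + r ≤ μ i)
    (j : ℕ) (hj1 : 1 ≤ j) (hjn : j ≤ n)
    (lam : ℕ → ℕ) (hlam : ∀ m, lam m = if m = j then μ j + 1 else μ m)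
    (hpart : j = 1 ∨ μ j < μ (j - 1))
    (hnot : ¬ (∀ i, 1 ≤ i → i + k ≤ n → lam (i + k) + r ≤ lam i)) :
    k < j ∧ μ (j - k) = μ j + r ∧
    (((k : ℚ) + 1) * β + (μ (j - k) : ℚ) - (μ j : ℚ) - 1 = 0) ∧
    (∏ i ∈ Finset.Icc 1 (j - 1),
      ((((j : ℚ) - (i : ℚ) - 1) * β + (μ i : ℚ) - (μ j : ℚ)) /
        (((j : ℚ) - (i : ℚ)) * β + (μ i : ℚ) - (μ j : ℚ) - 1)) *
      ((((j : ℚ) - (i : ℚ) + 1) * β + (μ i : ℚ) - (μ j : ℚ) - 1) /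
        (((j : ℚ) - (i : ℚ)) * β + (μ i : ℚ) - (μ j : ℚ)))
      = 0) := by
  push_neg at hnot
  obtain ⟨i, hi1, hikn, hviol⟩ := hnot
  rw [hlam, hlam] at hviol
  have hadm_i := hadm i hi1 hikn
  have hik : i + k = j := by
    by_cases hij : i = j
    · subst hij
      by_cases hne : i + k = i <;> simp [hne, show k ≠ 0 by omega] at hviol <;> omega
    · by_cases hne : i + k = j <;> simp [hne, hij] at hviol <;> omega
  have hkj : k < j := by omega
  have hjk : j - k = i := by omega
  have heq : μ (j - k) = μ j + r := by
    rw [hjk]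
    rw [hik] at hadm_i
    simp [hik, if_neg (show i ≠ j by omega)] at hviol
    omega
  have hkne : (k : ℚ) + 1 ≠ 0 := by positivity
  have hc : ((j - k : ℕ) : ℚ) = (j : ℚ) - (k : ℚ) := by
    push_cast [Nat.cast_sub hkj.le]; ring
  have h3 : ((k : ℚ) + 1) * β + (μ (j - k) : ℚ) - (μ j : ℚ) - 1 = 0 := by
    rw [heq, hβ]; push_cast; field_simp; ring
  refine ⟨hkj, heq, h3, ?_⟩
  apply Finset.prod_eq_zero (i := j - k)
  · rw [Finset.mem_Icc]; omega
  · have hN : ((j : ℚ) - ((j - k : ℕ) : ℚ) + 1) * β + (μ (j - k) : ℚ) - (μ j : ℚ) - 1 = 0 := by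
      rw [hc, heq, hβ]; push_cast; field_simp; ring
    rw [hN, zero_div, mul_zero]
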